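/- arXiv:1109.5733 — 3 statements merged into one kernel-verified Lean document; each statement's English description precedes it below -/
import Mathlib

section
/- Let G ⊆ ℝ be a divisible additive subgroup, let 𝒫 be a finite collection of nonempty integral G-affine polyhedra in ℝ^n, and let Δ be an integral pointed fan that is a compactifying fan for 𝒫 (i.e. for each P ∈ 𝒫, the recession cone ρ(P) is a union of cones of Δ). Then there exists a Δ-decomposition of 𝒫, i.e. a refinement 𝒫' of 𝒫 consisting of integral G-affine polyhedra such that ρ(P) ∈ Δ for every P ∈ 𝒫'. -/
open Set

/-- A polyhedron: a finite intersection of closed halfspaces `{v : ⟨uᵢ, v⟩ ≤ cᵢ}`. -/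
def IsPolyhedron {V : Type*} [AddCommGroup V] [Module ℝ V] (P : Set V) : Prop :=
  ∃ (m : ℕ) (u : Fin m → (V →ₗ[ℝ] ℝ)) (c : Fin m → ℝ),
    P = ⋂ i, {v : V | u i v ≤ c i}

/-- The recession cone `ρ(P) = {w : v + w ∈ P for all v ∈ P}`. -/
def recCone {V : Type*} [AddCommGroup V] [Module ℝ V] (P : Set V) : Set V :=
  {w : V | ∀ v ∈ P, v + w ∈ P}

/-- A polyhedral cone: a finite intersection of halfspaces `{v : ⟨uᵢ, v⟩ ≤ 0}`. -/
def IsPolyCone {V : Type*} [AddCommGroup V] [Module ℝ V] (σ : Set V) : Prop :=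
  ∃ (m : ℕ) (u : Fin m → (V →ₗ[ℝ] ℝ)), σ = ⋂ i, {v : V | u i v ≤ 0}

/-- A set is pointed if it contains no nonzero linear subspace. -/
def IsPointedSet {V : Type*} [AddCommGroup V] [Module ℝ V] (σ : Set V) : Prop :=
  ∀ W : Submodule ℝ V, (W : Set V) ⊆ σ → W = ⊥

/-- `F` is a face of the polyhedral cone `σ`. -/
def IsFaceOfCone {V : Type*} [AddCommGroup V] [Module ℝ V] (σ F : Set V) : Prop :=
  ∃ u : V →ₗ[ℝ] ℝ, (∀ x ∈ σ, u x ≤ 0) ∧ F = {x ∈ σ | u x = 0}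

/-- A fan: a finite collection of polyhedral cones, closed under taking faces, such that
the intersection of any two cones is a face of each. -/
def IsFan {V : Type*} [AddCommGroup V] [Module ℝ V] (Δ : Set (Set V)) : Prop :=
  Δ.Finite ∧ (∀ σ ∈ Δ, IsPolyCone σ) ∧
    (∀ σ ∈ Δ, ∀ F : Set V, IsFaceOfCone σ F → F ∈ Δ) ∧
    (∀ σ ∈ Δ, ∀ τ ∈ Δ, IsFaceOfCone σ (σ ∩ τ) ∧ IsFaceOfCone τ (σ ∩ τ))

/-- A pointed fan: a fan all of whose cones are pointed. -/
def IsPointedFan {V : Type*} [AddCommGroup V] [Module ℝ V] (Δ : Set (Set V)) : Prop :=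
  IsFan Δ ∧ ∀ σ ∈ Δ, IsPointedSet σ

/-- An integral `G`-affine polyhedron in `ℝⁿ`: defined by `⟨uᵢ, v⟩ ≤ aᵢ` with `uᵢ ∈ ℤⁿ`
and `aᵢ ∈ G`. -/
def IsIntegralGPolyhedron {n : ℕ} (G : AddSubgroup ℝ) (P : Set (Fin n → ℝ)) : Prop :=
  ∃ (m : ℕ) (u : Fin m → Fin n → ℤ) (a : Fin m → ℝ),
    (∀ i, a i ∈ G) ∧ P = ⋂ i, {v : Fin n → ℝ | ∑ j, (u i j : ℝ) * v j ≤ a i}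

/-- An integral polyhedral cone in `ℝⁿ`: defined by `⟨uᵢ, v⟩ ≤ 0` with `uᵢ ∈ ℤⁿ`. -/
def IsIntegralCone {n : ℕ} (σ : Set (Fin n → ℝ)) : Prop :=
  ∃ (m : ℕ) (u : Fin m → Fin n → ℤ),
    σ = ⋂ i, {v : Fin n → ℝ | ∑ j, (u i j : ℝ) * v j ≤ 0}

/-- `Δ` is a compactifying fan for `𝒞`: each recession cone `ρ(P)`, `P ∈ 𝒞`, is a union
of cones of `Δ`. -/
def IsCompactifyingFan {V : Type*} [AddCommGroup V] [Module ℝ V]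
    (Δ 𝒞 : Set (Set V)) : Prop :=
  ∀ P ∈ 𝒞, ∃ S ⊆ Δ, recCone P = ⋃₀ S

/-- `𝒞'` is a refinement of `𝒞`: a finite collection of polyhedra, each contained in a member
of `𝒞`, such that each member of `𝒞` is the union of the members of `𝒞'` it contains. -/
def IsRefinement {V : Type*} (𝒞 𝒞' : Set (Set V)) : Prop :=
  𝒞'.Finite ∧ (∀ Q ∈ 𝒞', ∃ P ∈ 𝒞, Q ⊆ P) ∧ ∀ P ∈ 𝒞, P = ⋃₀ {Q ∈ 𝒞' | Q ⊆ P}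


section Aux
open Finset


variable {E : Type*} [AddCommGroup E] [Module ℝ E]

/-- The cone generated by a finite family of vectors. -/
def coneGen {ι : Type*} [Fintype ι] (g : ι → E) : Set E :=
  {x | ∃ c : ι → ℝ, (∀ k, 0 ≤ c k) ∧ x = ∑ k, c k • g k}

lemma self_mem_coneGen {ι : Type*} [Fintype ι] [DecidableEq ι] (g : ι → E) (k : ι) :
    g k ∈ coneGen g := by
  refine ⟨fun j => if j = k then 1 else 0, fun j => by positivity, ?_⟩
  rw [Finset.sum_eq_single k]
  · simp
  · intro b _ hb; simp [hb]
  · simp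

lemma coneGen_comp {ι κ : Type*} [Fintype ι] [Fintype κ] (e : κ ≃ ι) (g : ι → E) :
    coneGen (g ∘ e) = coneGen g := by
  ext x
  constructor
  · rintro ⟨c, hc, rfl⟩
    exact ⟨c ∘ e.symm, fun k => hc _, by
      rw [← Equiv.sum_comp e (fun k => (c ∘ e.symm) k • g k)]; simp⟩
  · rintro ⟨c, hc, rfl⟩
    exact ⟨c ∘ e, fun k => hc _, by
      rw [← Equiv.sum_comp e (fun k => c k • g k)]; rfl⟩

lemma coneGen_subset {ι : Type*} [Fintype ι] (g : ι → E) {m : ℕ}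
    (u : Fin m → (E →ₗ[ℝ] ℝ)) (hg : ∀ k, ∀ i, u i (g k) ≤ 0) :
    coneGen g ⊆ {x | ∀ i, u i x ≤ 0} := by
  rintro x ⟨c, hc, rfl⟩ i
  simp only [map_sum, map_smul, smul_eq_mul]
  exact Finset.sum_nonpos fun k _ => mul_nonpos_of_nonneg_of_nonpos (hc k) (hg k i)

/-- Double-description generators for `σ ∩ {v ≤ 0}` given generators `g` of `σ`. -/
noncomputable def ddGen (v : E →ₗ[ℝ] ℝ) {N : ℕ} (g : Fin N → E) :
    (Fin N ⊕ Fin N × Fin N) → E :=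
  Sum.elim (fun k => if v (g k) ≤ 0 then g k else 0)
    (fun kl => if 0 < v (g kl.1) ∧ v (g kl.2) < 0
      then v (g kl.1) • g kl.2 - v (g kl.2) • g kl.1 else 0)


lemma coneGen_add_smul {ι : Type*} [Fintype ι] [DecidableEq ι] (g : ι → E) {x : E} {t : ℝ}
    (hx : x ∈ coneGen g) (ht : 0 ≤ t) (j0 : ι) : x + t • g j0 ∈ coneGen g := by
  obtain ⟨c, hc, rfl⟩ := hx
  refine ⟨fun j => c j + if j = j0 then t else 0, fun j => add_nonneg (hc j) (by split <;> simp [ht]), ?_⟩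
  have : ∑ j, (c j + if j = j0 then t else 0) • g j
      = ∑ j, c j • g j + ∑ j, (if j = j0 then t else 0) • g j := by
    rw [← Finset.sum_add_distrib]
    exact Finset.sum_congr rfl fun j _ => by rw [add_smul]
  rw [this]
  congr 1
  rw [Finset.sum_eq_single j0]
  · simp
  · intro b _ hb; simp [hb]
  · simp

lemma ddGen_nopos (v : E →ₗ[ℝ] ℝ) {N : ℕ} (g : Fin N → E) (c : Fin N → ℝ)
    (hc : ∀ k, 0 ≤ c k) (hall : ∀ k, c k ≠ 0 → v (g k) ≤ 0) :
    (∑ k, c k • g k) ∈ coneGen (ddGen v g) := by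
  refine ⟨Sum.elim (fun k => if v (g k) ≤ 0 then c k else 0) 0, ?_, ?_⟩
  · rintro (k | kl)
    · dsimp only [Sum.elim_inl]
      split
      · exact hc k
      · exact le_rfl
    · simp
  · rw [Fintype.sum_sum_type]
    simp only [Sum.elim_inl, Sum.elim_inr, Pi.zero_apply, zero_smul,
      Finset.sum_const_zero, add_zero, ddGen]
    refine Finset.sum_congr rfl fun k _ => ?_
    by_cases h : v (g k) ≤ 0
    · simp [h]
    · have : c k = 0 := by
        by_contra hk
        exact h (hall k hk)
      simp [h, this]

lemma ddGen_key (v : E →ₗ[ℝ] ℝ) {N : ℕ} (g : Fin N → E) :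
    ∀ (M : ℕ) (c : Fin N → ℝ),
      (Finset.univ.filter (fun k => c k ≠ 0 ∧ v (g k) ≠ 0)).card ≤ M →
      (∀ k, 0 ≤ c k) → v (∑ k, c k • g k) ≤ 0 →
      (∑ k, c k • g k) ∈ coneGen (ddGen v g) := by
  intro M
  induction M with
  | zero =>
    intro c hcard hc hv
    refine ddGen_nopos v g c hc fun k hk => ?_
    by_contra hvk
    have hmem : k ∈ Finset.univ.filter (fun k => c k ≠ 0 ∧ v (g k) ≠ 0) := by
      simp only [Finset.mem_filter, Finset.mem_univ, true_and]
      exact ⟨hk, fun h => hvk (le_of_eq h)⟩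
    have := Finset.card_pos.2 ⟨k, hmem⟩
    omega
  | succ M ih =>
    intro c hcard hc hv
    by_cases hex : ∃ k, c k ≠ 0 ∧ 0 < v (g k)
    · obtain ⟨kp, hkp0, hkpv⟩ := hex
      have hvsum : v (∑ k, c k • g k) = ∑ k, c k * v (g k) := by
        simp [map_sum, map_smul]
      have hexn : ∃ k, c k ≠ 0 ∧ v (g k) < 0 := by
        by_contra hno
        push_neg at hno
        have hpos : 0 < ∑ k, c k * v (g k) := by
          refine Finset.sum_pos' (fun k _ => ?_) ⟨kp, Finset.mem_univ _, ?_⟩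
          · by_cases h : c k = 0
            · simp [h]
            · exact mul_nonneg (hc k) (hno k h)
          · exact mul_pos (lt_of_le_of_ne (hc kp) (Ne.symm hkp0)) hkpv
        rw [hvsum] at hv
        linarith
      obtain ⟨kn, hkn0, hknv⟩ := hexn
      have hkpkn : kp ≠ kn := fun h => by rw [h] at hkpv; linarith
      have hbpos : 0 < -(v (g kn)) := by linarith
      have hcp : 0 < c kp := lt_of_le_of_ne (hc kp) (Ne.symm hkp0)
      have hcn : 0 < c kn := lt_of_le_of_ne (hc kn) (Ne.symm hkn0)
      set a := v (g kp) with ha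
      set b := -(v (g kn)) with hb
      set t := min (c kp / b) (c kn / a) with ht
      have htpos : 0 < t := lt_min (div_pos hcp hbpos) (div_pos hcn hkpv)
      set c' : Fin N → ℝ := fun k =>
        if k = kp then c kp - t * b else if k = kn then c kn - t * a else c k with hc'def
      have hc'p : c' kp = c kp - t * b := by simp [hc'def]
      have hc'n : c' kn = c kn - t * a := by simp [hc'def, hkpkn, Ne.symm hkpkn]
      have hc'nonneg : ∀ k, 0 ≤ c' k := by
        intro k
        by_cases h1 : k = kp
        · rw [h1, hc'p]
          have h2 : t * b ≤ (c kp / b) * b :=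
            mul_le_mul_of_nonneg_right (min_le_left _ _) (le_of_lt hbpos)
          rw [div_mul_cancel₀ _ (ne_of_gt hbpos)] at h2
          linarith
        · by_cases h2 : k = kn
          · rw [h2, hc'n]
            have h3 : t * a ≤ (c kn / a) * a :=
              mul_le_mul_of_nonneg_right (min_le_right _ _) (le_of_lt hkpv)
            rw [div_mul_cancel₀ _ (ne_of_gt hkpv)] at h3
            linarith
          · simpa [hc'def, h1, h2] using hc k
      set hvec : E := a • g kn + b • g kp with hhvec
      have hdd : ddGen v g (Sum.inr (kp, kn)) = hvec := by
        simp only [ddGen, Sum.elim_inr]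
        rw [if_pos ⟨hkpv, hknv⟩]
        rw [hhvec, hb, neg_smul, sub_eq_add_neg]
        try abel
      have hvhvec : v hvec = 0 := by
        simp only [hhvec, map_add, map_smul, smul_eq_mul, ← ha, hb]
        ring
      have hsum : ∑ k, c k • g k = (∑ k, c' k • g k) + t • hvec := by
        have key : ∀ k, c k • g k = c' k • g k +
            ((if k = kp then (t * b) • g kp else 0) + (if k = kn then (t * a) • g kn else 0)) := by
          intro k
          by_cases h1 : k = kp
          · subst h1
            rw [if_pos rfl, if_neg hkpkn, hc'p, sub_smul, add_zero]
            abel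
          · by_cases h2 : k = kn
            · subst h2
              rw [if_neg h1, if_pos rfl, hc'n, sub_smul, zero_add]
              try abel
            · simp [hc'def, h1, h2]
        calc ∑ k, c k • g k
            = ∑ k, (c' k • g k +
              ((if k = kp then (t * b) • g kp else 0) + (if k = kn then (t * a) • g kn else 0))) :=
              Finset.sum_congr rfl fun k _ => key k
          _ = (∑ k, c' k • g k) + ((∑ k, if k = kp then (t * b) • g kp else 0)
              + (∑ k, if k = kn then (t * a) • g kn else 0)) := by
              rw [Finset.sum_add_distrib, Finset.sum_add_distrib]
          _ = (∑ k, c' k • g k) + ((t * b) • g kp + (t * a) • g kn) := by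
              rw [Finset.sum_ite_eq' Finset.univ kp (fun _ => (t * b) • g kp),
                Finset.sum_ite_eq' Finset.univ kn (fun _ => (t * a) • g kn)]
              simp
          _ = (∑ k, c' k • g k) + t • hvec := by
              rw [hhvec, smul_add, smul_smul, smul_smul]
              abel
      have hv' : v (∑ k, c' k • g k) ≤ 0 := by
        have : v (∑ k, c k • g k) = v (∑ k, c' k • g k) + t * v hvec := by
          rw [hsum, map_add, map_smul, smul_eq_mul]
        rw [hvhvec, mul_zero, add_zero] at this
        rw [← this]
        exact hv
      -- one of the two coefficients vanishes
      have hzero : c' kp = 0 ∨ c' kn = 0 := by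
        rcases min_choice (c kp / b) (c kn / a) with h | h
        · left
          rw [hc'p, ht, h, div_mul_cancel₀ _ (ne_of_gt hbpos), sub_self]
        · right
          rw [hc'n, ht, h, div_mul_cancel₀ _ (ne_of_gt hkpv), sub_self]
      obtain ⟨k0, hk0mem, hk0zero⟩ : ∃ k0, (k0 = kp ∨ k0 = kn) ∧ c' k0 = 0 := by
        rcases hzero with h | h
        · exact ⟨kp, Or.inl rfl, h⟩
        · exact ⟨kn, Or.inr rfl, h⟩
      have hk0filter : k0 ∈ Finset.univ.filter (fun k => c k ≠ 0 ∧ v (g k) ≠ 0) := by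
        simp only [Finset.mem_filter, Finset.mem_univ, true_and]
        rcases hk0mem with h | h <;> subst h
        · exact ⟨hkp0, ne_of_gt hkpv⟩
        · exact ⟨hkn0, ne_of_lt hknv⟩
      have hsubset : Finset.univ.filter (fun k => c' k ≠ 0 ∧ v (g k) ≠ 0) ⊆
          (Finset.univ.filter (fun k => c k ≠ 0 ∧ v (g k) ≠ 0)).erase k0 := by
        intro k hk
        simp only [Finset.mem_filter, Finset.mem_univ, true_and] at hk
        rw [Finset.mem_erase]
        constructor
        · intro h; subst h; exact hk.1 hk0zero
        · simp only [Finset.mem_filter, Finset.mem_univ, true_and]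
          refine ⟨?_, hk.2⟩
          by_cases h1 : k = kp
          · subst h1; exact hkp0
          · by_cases h2 : k = kn
            · subst h2; exact hkn0
            · intro h
              apply hk.1
              simp [hc'def, h1, h2, h]
      have hcard' : (Finset.univ.filter (fun k => c' k ≠ 0 ∧ v (g k) ≠ 0)).card ≤ M := by
        have h1 := Finset.card_le_card hsubset
        rw [Finset.card_erase_of_mem hk0filter] at h1
        omega
      have hmem' := ih c' hcard' hc'nonneg hv'
      rw [hsum, ← hdd]
      exact coneGen_add_smul _ hmem' (le_of_lt htpos) _
    · push_neg at hex
      exact ddGen_nopos v g c hc hex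

lemma max_sub_max_neg (a : ℝ) : max a 0 - max (-a) 0 = a := by
  rcases le_total 0 a with h | h
  · rw [max_eq_left h, max_eq_right (by linarith), sub_zero]
  · rw [max_eq_right h, max_eq_left (by linarith)]
    ring

theorem halfCone_fg [FiniteDimensional ℝ E] :
    ∀ (m : ℕ) (u : Fin m → (E →ₗ[ℝ] ℝ)),
      ∃ (N : ℕ) (g : Fin N → E), {x : E | ∀ i, u i x ≤ 0} = coneGen g := by
  intro m
  induction m with
  | zero =>
    intro u
    set d := Module.finrank ℝ E with hd
    set b := Module.finBasis ℝ E with hb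
    refine ⟨d + d, Fin.append (fun i => b i) (fun i => -(b i)), ?_⟩
    ext x
    simp only [mem_setOf_eq, IsEmpty.forall_iff, true_iff]
    refine ⟨Fin.append (fun i => max (b.repr x i) 0) (fun i => max (-(b.repr x i)) 0),
      ?_, ?_⟩
    · intro k
      refine Fin.addCases (fun i => ?_) (fun i => ?_) k
      · rw [Fin.append_left]; exact le_max_right _ _
      · rw [Fin.append_right]; exact le_max_right _ _
    · rw [Fin.sum_univ_add]
      have h1 : ∀ i : Fin d,
          (Fin.append (fun i => max (b.repr x i) 0) (fun i => max (-(b.repr x i)) 0)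
            (Fin.castAdd d i)) •
          (Fin.append (fun i => (b i : E)) (fun i => -(b i : E)) (Fin.castAdd d i))
          = max (b.repr x i) 0 • (b i : E) := by
        intro i; rw [Fin.append_left, Fin.append_left]
      have h2 : ∀ i : Fin d,
          (Fin.append (fun i => max (b.repr x i) 0) (fun i => max (-(b.repr x i)) 0)
            (Fin.natAdd d i)) •
          (Fin.append (fun i => (b i : E)) (fun i => -(b i : E)) (Fin.natAdd d i))
          = max (-(b.repr x i)) 0 • (-(b i : E)) := by
        intro i; rw [Fin.append_right, Fin.append_right]
      rw [Finset.sum_congr rfl (fun i _ => h1 i), Finset.sum_congr rfl (fun i _ => h2 i),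
        ← Finset.sum_add_distrib]
      have h3 : ∀ i : Fin d, max (b.repr x i) 0 • (b i : E) + max (-(b.repr x i)) 0 • (-(b i : E))
          = b.repr x i • (b i : E) := by
        intro i
        rw [smul_neg, ← sub_eq_add_neg, ← sub_smul, max_sub_max_neg]
      rw [Finset.sum_congr rfl (fun i _ => h3 i)]
      exact (Module.Basis.sum_repr b x).symm
  | succ m ih =>
    intro u
    obtain ⟨N, g, hg⟩ := ih (fun i => u i.succ)
    set v := u 0 with hv
    have hgen : ∀ k, ∀ i : Fin m, u i.succ (g k) ≤ 0 := by
      intro k i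
      have : g k ∈ {x : E | ∀ i : Fin m, u i.succ x ≤ 0} := by
        rw [hg]; exact self_mem_coneGen g k
      exact this i
    have hmain : {x : E | ∀ i, u i x ≤ 0} = coneGen (ddGen v g) := by
      apply Set.Subset.antisymm
      · intro x hx
        have hx' : x ∈ coneGen g := by
          rw [← hg]; exact fun i => hx i.succ
        obtain ⟨c, hc, rfl⟩ := hx'
        exact ddGen_key v g _ c le_rfl hc (hx 0)
      · refine coneGen_subset _ u ?_
        rintro (k | ⟨k, l⟩) i
        · simp only [ddGen, Sum.elim_inl]
          split
          · refine Fin.cases ?_ (fun i => hgen k i) i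
            assumption
          · simp
        · simp only [ddGen, Sum.elim_inr]
          split
          · rename_i hcond
            obtain ⟨hk, hl⟩ := hcond
            simp only [map_sub, map_smul, smul_eq_mul]
            refine Fin.cases ?_ (fun i => ?_) i
            · rw [← hv]; nlinarith
            · have h1 := hgen l i
              have h2 := hgen k i
              nlinarith
          · simp
    refine ⟨Fintype.card (Fin N ⊕ Fin N × Fin N),
      ddGen v g ∘ (Fintype.equivFin (Fin N ⊕ Fin N × Fin N)).symm, ?_⟩
    rw [hmain, coneGen_comp]

/-- Decomposition of a polyhedron: a convex-combination part from finitely many carrier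
points plus a recession direction. -/
theorem exists_carrier [FiniteDimensional ℝ E] (m : ℕ) (φ : Fin m → (E →ₗ[ℝ] ℝ))
    (a : Fin m → ℝ) :
    ∃ (N : ℕ) (p : Fin N → E), ∀ x : E, (∀ i, φ i x ≤ a i) →
      ∃ (t : Fin N → ℝ) (w : E), (∀ k, 0 ≤ t k) ∧ (∑ k, t k = 1) ∧
        (∀ i, φ i w ≤ 0) ∧ x = (∑ k, t k • p k) + w := by
  set ψ : Fin (m + 1) → (E × ℝ →ₗ[ℝ] ℝ) :=
    Fin.cases (-(LinearMap.snd ℝ E ℝ))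
      (fun i => (φ i).comp (LinearMap.fst ℝ E ℝ) - a i • LinearMap.snd ℝ E ℝ) with hψ
  obtain ⟨N, g, hg⟩ := halfCone_fg (m + 1) ψ
  have hmemg : ∀ k, ∀ i, ψ i (g k) ≤ 0 := by
    intro k
    have : g k ∈ {z : E × ℝ | ∀ i, ψ i z ≤ 0} := by
      rw [hg]; exact self_mem_coneGen g k
    exact this
  have hs : ∀ k, 0 ≤ (g k).2 := by
    intro k
    have := hmemg k 0
    simp only [hψ, Fin.cases_zero, LinearMap.neg_apply, LinearMap.snd_apply] at this
    linarith
  have hφg : ∀ k i, φ i (g k).1 ≤ a i * (g k).2 := by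
    intro k i
    have := hmemg k i.succ
    simp only [hψ, Fin.cases_succ, LinearMap.sub_apply, LinearMap.coe_comp,
      Function.comp_apply, LinearMap.fst_apply, LinearMap.smul_apply,
      LinearMap.snd_apply, smul_eq_mul] at this
    linarith
  refine ⟨N, fun k => if 0 < (g k).2 then ((g k).2)⁻¹ • (g k).1 else 0, ?_⟩
  intro x hx
  have hxmem : (x, (1:ℝ)) ∈ {z : E × ℝ | ∀ i, ψ i z ≤ 0} := by
    intro i
    refine Fin.cases ?_ (fun i => ?_) i
    · simp [hψ]
    · simp only [hψ, Fin.cases_succ, LinearMap.sub_apply, LinearMap.coe_comp,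
        Function.comp_apply, LinearMap.fst_apply, LinearMap.smul_apply,
        LinearMap.snd_apply, smul_eq_mul, mul_one]
      linarith [hx i]
  rw [hg] at hxmem
  obtain ⟨c, hc, hceq⟩ := hxmem
  have hfst : x = ∑ k, c k • (g k).1 := by
    have := congrArg Prod.fst hceq
    simpa [Prod.fst_sum] using this
  have hsnd : (1:ℝ) = ∑ k, c k * (g k).2 := by
    have := congrArg Prod.snd hceq
    simpa [Prod.snd_sum, smul_eq_mul] using this
  refine ⟨fun k => c k * (g k).2, ∑ k, if 0 < (g k).2 then (0:E) else c k • (g k).1,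
    fun k => mul_nonneg (hc k) (hs k), hsnd.symm, ?_, ?_⟩
  · intro i
    rw [map_sum]
    refine Finset.sum_nonpos fun k _ => ?_
    by_cases h : 0 < (g k).2
    · simp [h]
    · have hzero : (g k).2 = 0 := le_antisymm (not_lt.1 h) (hs k)
      have := hφg k i
      rw [hzero, mul_zero] at this
      simp only [h, if_false, map_smul, smul_eq_mul]
      exact mul_nonpos_of_nonneg_of_nonpos (hc k) this
  · have key : ∀ k, (c k * (g k).2) • (if 0 < (g k).2 then ((g k).2)⁻¹ • (g k).1 else 0)
        + (if 0 < (g k).2 then (0:E) else c k • (g k).1) = c k • (g k).1 := by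
      intro k
      by_cases h : 0 < (g k).2
      · rw [if_pos h, if_pos h, add_zero, smul_smul, mul_assoc,
          mul_inv_cancel₀ (ne_of_gt h), mul_one]
      · rw [if_neg h, if_neg h, smul_zero, zero_add]
    rw [hfst, ← Finset.sum_add_distrib]
    exact Finset.sum_congr rfl fun k _ => (key k).symm

/-- The recession cone of a nonempty finite intersection of halfspaces. -/
lemma recCone_iInter {E : Type*} [AddCommGroup E] [Module ℝ E] {m : ℕ}
    (φ : Fin m → (E →ₗ[ℝ] ℝ)) (a : Fin m → ℝ)
    (hne : (⋂ i, {x : E | φ i x ≤ a i}).Nonempty) :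
    recCone (⋂ i, {x : E | φ i x ≤ a i}) = ⋂ i, {x : E | φ i x ≤ 0} := by
  apply Set.Subset.antisymm
  · intro w hw
    obtain ⟨v₀, hv₀⟩ := hne
    have hstep : ∀ k : ℕ, v₀ + (k : ℝ) • w ∈ ⋂ i, {x : E | φ i x ≤ a i} := by
      intro k
      induction k with
      | zero => simpa using hv₀
      | succ k ihk =>
        have := hw _ ihk
        have heq : v₀ + ((k : ℝ) + 1) • w = (v₀ + (k : ℝ) • w) + w := by
          rw [add_smul, one_smul, add_assoc]
        push_cast
        rw [heq]
        exact this
    simp only [Set.mem_iInter, Set.mem_setOf_eq] at hstep ⊢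
    intro i
    by_contra hpos
    push_neg at hpos
    obtain ⟨k, hk⟩ := exists_nat_gt ((a i - φ i v₀) / φ i w)
    have h1 := hstep k i
    rw [map_add, map_smul, smul_eq_mul] at h1
    have h2 : (a i - φ i v₀) < k * φ i w := by
      rw [div_lt_iff₀ hpos] at hk
      linarith
    linarith
  · intro w hw
    simp only [Set.mem_iInter, Set.mem_setOf_eq] at hw
    intro v hv
    simp only [Set.mem_iInter, Set.mem_setOf_eq] at hv ⊢
    intro i
    rw [map_add]
    linarith [hv i, hw i]

/-- The linear functional on `ℝⁿ` attached to an integer vector. -/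
noncomputable def intFun {n : ℕ} (u : Fin n → ℤ) : (Fin n → ℝ) →ₗ[ℝ] ℝ :=
  ∑ j, (u j : ℝ) • LinearMap.proj j

@[simp] lemma intFun_apply {n : ℕ} (u : Fin n → ℤ) (x : Fin n → ℝ) :
    intFun u x = ∑ j, (u j : ℝ) * x j := by
  simp [intFun, LinearMap.proj_apply]

lemma forall_fin_add {m m' : ℕ} (p : Fin (m + m') → Prop) :
    (∀ i, p i) ↔ (∀ i : Fin m, p (Fin.castAdd m' i)) ∧ (∀ i : Fin m', p (Fin.natAdd m i)) :=
  ⟨fun h => ⟨fun i => h _, fun i => h _⟩, fun h i => Fin.addCases h.1 h.2 i⟩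

/-- The main per-polyhedron decomposition lemma. -/
lemma main_P {n : ℕ} (G : AddSubgroup ℝ) (P : Set (Fin n → ℝ))
    (hP : IsIntegralGPolyhedron G P) (hne : P.Nonempty)
    (S : Set (Set (Fin n → ℝ))) (hSfin : S.Finite)
    (hSint : ∀ σ ∈ S, IsIntegralCone σ)
    (hrec : recCone P = ⋃₀ S) :
    ∃ 𝒬 : Set (Set (Fin n → ℝ)), 𝒬.Finite ∧
      (∀ Q ∈ 𝒬, IsIntegralGPolyhedron G Q ∧ Q ⊆ P ∧ recCone Q ∈ S) ∧ P = ⋃₀ 𝒬 := by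
  classical
  obtain ⟨m, u, a, haG, hPeq⟩ := hP
  have hPeq' : P = ⋂ i, {x : Fin n → ℝ | intFun (u i) x ≤ a i} := by
    rw [hPeq]
    exact Set.iInter_congr fun i => by ext x; simp
  have hdesc : ∀ σ : Set (Fin n → ℝ), ∃ (mσ : ℕ) (vσ : Fin mσ → Fin n → ℤ),
      σ ∈ S → σ = ⋂ j, {x : Fin n → ℝ | intFun (vσ j) x ≤ 0} := by
    intro σ
    by_cases h : σ ∈ S
    · obtain ⟨mσ, vσ, hσ⟩ := hSint σ h
      refine ⟨mσ, vσ, fun _ => ?_⟩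
      rw [hσ]
      exact Set.iInter_congr fun j => by ext x; simp
    · exact ⟨0, fun _ => 0, fun h' => absurd h' h⟩
  choose mS vS hvS using hdesc
  have hrecP : recCone P = ⋂ i, {x : Fin n → ℝ | intFun (u i) x ≤ 0} := by
    rw [hPeq']
    exact recCone_iInter _ _ (hPeq' ▸ hne)
  obtain ⟨N, p, hp⟩ := exists_carrier m (fun i => intFun (u i)) a
  obtain ⟨B, hB⟩ : ∃ B : ℝ, ∀ σ ∈ S, ∀ j : Fin (mS σ), ∀ k : Fin N,
      intFun (vS σ j) (p k) ≤ B := by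
    have hfin : (⋃ σ ∈ S, Set.range (fun jk : Fin (mS σ) × Fin N =>
        intFun (vS σ jk.1) (p jk.2))).Finite :=
      Set.Finite.biUnion hSfin fun σ _ => Set.finite_range _
    obtain ⟨B, hB⟩ := hfin.bddAbove
    exact ⟨B, fun σ hσ j k => hB (Set.mem_biUnion hσ ⟨(j, k), rfl⟩)⟩
  -- choose the truncation level M
  obtain ⟨M, hMG, hcover⟩ : ∃ M : ℝ, M ∈ G ∧
      ∀ x ∈ P, ∃ σ ∈ S, ∀ j : Fin (mS σ), intFun (vS σ j) x ≤ M := by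
    by_cases hGtriv : ∃ g ∈ G, 0 < g
    · obtain ⟨g, hgG, hgpos⟩ := hGtriv
      obtain ⟨K, hK⟩ := exists_nat_gt (max B 0 / g)
      have hKg : max B 0 < (K : ℝ) * g := by
        rw [div_lt_iff₀ hgpos] at hK
        linarith
      refine ⟨(K : ℝ) * g, ?_, ?_⟩
      · have := AddSubgroup.nsmul_mem G hgG K
        simpa [nsmul_eq_mul] using this
      · intro x hx
        have hx' : ∀ i, intFun (u i) x ≤ a i := by
          rw [hPeq'] at hx
          exact Set.mem_iInter.1 hx
        obtain ⟨t, w, ht0, ht1, hw, hxeq⟩ := hp x hx'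
        have hwrec : w ∈ recCone P := by
          rw [hrecP]
          exact Set.mem_iInter.2 hw
        rw [hrec] at hwrec
        obtain ⟨σ, hσS, hwσ⟩ := hwrec
        refine ⟨σ, hσS, fun j => ?_⟩
        have hwσ' : intFun (vS σ j) w ≤ 0 := by
          rw [hvS σ hσS] at hwσ
          exact Set.mem_iInter.1 hwσ j
        have hconv : intFun (vS σ j) (∑ k, t k • p k) ≤ B := by
          rw [map_sum]
          simp only [map_smul, smul_eq_mul]
          calc ∑ k, t k * intFun (vS σ j) (p k) ≤ ∑ k, t k * B :=
                Finset.sum_le_sum fun k _ =>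
                  mul_le_mul_of_nonneg_left (hB σ hσS j k) (ht0 k)
            _ = B := by rw [← Finset.sum_mul, ht1, one_mul]
        have : intFun (vS σ j) x = intFun (vS σ j) (∑ k, t k • p k) + intFun (vS σ j) w := by
          rw [hxeq, map_add]
        rw [this]
        have hBM : B ≤ (K : ℝ) * g := le_trans (le_max_left _ _) (le_of_lt hKg)
        linarith
    · push_neg at hGtriv
      have hG0 : ∀ g ∈ G, g = 0 := by
        intro g hg
        have h1 := hGtriv g hg
        have h2 := hGtriv (-g) (neg_mem hg)
        linarith
      refine ⟨0, zero_mem G, ?_⟩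
      intro x hx
      have hx' : ∀ i, intFun (u i) x ≤ a i := by
        rw [hPeq'] at hx
        exact Set.mem_iInter.1 hx
      have hxrec : x ∈ recCone P := by
        rw [hrecP]
        refine Set.mem_iInter.2 fun i => ?_
        have := hx' i
        rw [hG0 (a i) (haG i)] at this
        exact this
      rw [hrec] at hxrec
      obtain ⟨σ, hσS, hxσ⟩ := hxrec
      refine ⟨σ, hσS, fun j => ?_⟩
      rw [hvS σ hσS] at hxσ
      exact Set.mem_iInter.1 hxσ j
  -- the pieces
  set Qf : Set (Fin n → ℝ) → Set (Fin n → ℝ) :=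
    fun σ => P ∩ ⋂ j, {x : Fin n → ℝ | intFun (vS σ j) x ≤ M} with hQf
  have hQdesc : ∀ σ ∈ S, Qf σ = ⋂ i : Fin (m + mS σ),
      {x : Fin n → ℝ | intFun (Fin.append u (vS σ) i) x ≤ Fin.append a (fun _ => M) i} := by
    intro σ hσS
    ext x
    constructor
    · rintro ⟨hx1, hx2⟩
      rw [hPeq'] at hx1
      have h1 := Set.mem_iInter.1 hx1
      have h2 := Set.mem_iInter.1 hx2
      refine Set.mem_iInter.2 fun i => ?_
      refine Fin.addCases (fun i => ?_) (fun i => ?_) i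
      · simp only [Set.mem_setOf_eq, Fin.append_left]; exact h1 i
      · simp only [Set.mem_setOf_eq, Fin.append_right]; exact h2 i
    · intro hx
      have h := Set.mem_iInter.1 hx
      constructor
      · rw [hPeq']
        refine Set.mem_iInter.2 fun i => ?_
        have := h (Fin.castAdd _ i)
        simpa [Fin.append_left] using this
      · refine Set.mem_iInter.2 fun j => ?_
        have := h (Fin.natAdd _ j)
        simpa [Fin.append_right] using this
  refine ⟨{Q | ∃ σ ∈ S, Qf σ = Q ∧ Q.Nonempty}, ?_, ?_, ?_⟩
  · refine Set.Finite.subset (hSfin.image Qf) ?_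
    rintro Q ⟨σ, hσS, hQeq, -⟩
    exact ⟨σ, hσS, hQeq⟩
  · rintro Q ⟨σ, hσS, hQeq, hQne⟩
    subst hQeq
    have hsub : Qf σ ⊆ P := Set.inter_subset_left
    refine ⟨?_, hsub, ?_⟩
    · refine ⟨m + mS σ, Fin.append u (vS σ), Fin.append a (fun _ => M), ?_, ?_⟩
      · intro i
        refine Fin.addCases (fun i => ?_) (fun i => ?_) i
        · rw [Fin.append_left]; exact haG i
        · rw [Fin.append_right]; exact hMG
      · rw [hQdesc σ hσS]
        exact Set.iInter_congr fun i => by ext x; simp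
    · have hrecQ : recCone (Qf σ) = σ := by
        rw [hQdesc σ hσS, recCone_iInter _ _ ((hQdesc σ hσS) ▸ hQne)]
        have : (⋂ i : Fin (m + mS σ),
            {x : Fin n → ℝ | intFun (Fin.append u (vS σ) i) x ≤ 0})
            = recCone P ∩ σ := by
          ext x
          constructor
          · intro hx
            have h := Set.mem_iInter.1 hx
            constructor
            · rw [hrecP]
              refine Set.mem_iInter.2 fun i => ?_
              have := h (Fin.castAdd _ i)
              simpa [Fin.append_left] using this
            · rw [hvS σ hσS]
              refine Set.mem_iInter.2 fun j => ?_
              have := h (Fin.natAdd _ j)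
              simpa [Fin.append_right] using this
          · rintro ⟨hx1, hx2⟩
            rw [hrecP] at hx1
            rw [hvS σ hσS] at hx2
            refine Set.mem_iInter.2 fun i => ?_
            refine Fin.addCases (fun i => ?_) (fun i => ?_) i
            · simp only [Set.mem_setOf_eq, Fin.append_left]
              exact Set.mem_iInter.1 hx1 i
            · simp only [Set.mem_setOf_eq, Fin.append_right]
              exact Set.mem_iInter.1 hx2 i
        rw [this]
        exact Set.inter_eq_right.2 (hrec ▸ Set.subset_sUnion_of_mem hσS)
      rw [hrecQ]
      exact hσS
  · apply Set.Subset.antisymm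
    · intro x hx
      obtain ⟨σ, hσS, hbound⟩ := hcover x hx
      have hxQ : x ∈ Qf σ := ⟨hx, Set.mem_iInter.2 hbound⟩
      exact ⟨Qf σ, ⟨σ, hσS, rfl, ⟨x, hxQ⟩⟩, hxQ⟩
    · rintro x ⟨Q, ⟨σ, hσS, hQeq, -⟩, hxQ⟩
      rw [← hQeq] at hxQ
      exact hxQ.1

end Aux

/-- If `G ⊆ ℝ` is a divisible subgroup, `𝒞` a finite collection of nonempty integral
`G`-affine polyhedra in `ℝⁿ`, and `Δ` an integral pointed compactifying fan for `𝒞`, then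
there is a `Δ`-decomposition of `𝒞`: a refinement `𝒞'` of `𝒞` consisting of integral
`G`-affine polyhedra with `ρ(Q) ∈ Δ` for all `Q ∈ 𝒞'`. -/
theorem exists_delta_decomposition {n : ℕ} (G : AddSubgroup ℝ)
    (hGdiv : ∀ g ∈ G, ∀ k : ℕ, 0 < k → ∃ g' ∈ G, (k : ℝ) * g' = g)
    (𝒞 : Set (Set (Fin n → ℝ))) (h𝒞fin : 𝒞.Finite)
    (h𝒞 : ∀ P ∈ 𝒞, IsIntegralGPolyhedron G P ∧ P.Nonempty)
    (Δ : Set (Set (Fin n → ℝ))) (hΔ : IsPointedFan Δ)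
    (hΔint : ∀ σ ∈ Δ, IsIntegralCone σ) (hcpt : IsCompactifyingFan Δ 𝒞) :
    ∃ 𝒞' : Set (Set (Fin n → ℝ)), IsRefinement 𝒞 𝒞' ∧
      (∀ Q ∈ 𝒞', IsIntegralGPolyhedron G Q) ∧ ∀ Q ∈ 𝒞', recCone Q ∈ Δ := by
  classical
  have hchoice : ∀ P : Set (Fin n → ℝ), ∃ 𝒬 : Set (Set (Fin n → ℝ)), P ∈ 𝒞 →
      (𝒬.Finite ∧ (∀ Q ∈ 𝒬, IsIntegralGPolyhedron G Q ∧ Q ⊆ P ∧ recCone Q ∈ Δ) ∧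
        P = ⋃₀ 𝒬) := by
    intro P
    by_cases hPC : P ∈ 𝒞
    · obtain ⟨S, hSΔ, hrec⟩ := hcpt P hPC
      obtain ⟨𝒬, h1, h2, h3⟩ := main_P G P (h𝒞 P hPC).1 (h𝒞 P hPC).2 S
        (hΔ.1.1.subset hSΔ) (fun σ hσ => hΔint σ (hSΔ hσ)) hrec
      exact ⟨𝒬, fun _ => ⟨h1, fun Q hQ =>
        ⟨(h2 Q hQ).1, (h2 Q hQ).2.1, hSΔ (h2 Q hQ).2.2⟩, h3⟩⟩
    · exact ⟨∅, fun h => absurd h hPC⟩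
  choose 𝒬f h𝒬 using hchoice
  refine ⟨⋃ P ∈ 𝒞, 𝒬f P, ⟨?_, ?_, ?_⟩, ?_, ?_⟩
  · exact Set.Finite.biUnion h𝒞fin fun P hP => (h𝒬 P hP).1
  · intro Q hQ
    simp only [Set.mem_iUnion] at hQ
    obtain ⟨P, hP, hQP⟩ := hQ
    exact ⟨P, hP, ((h𝒬 P hP).2.1 Q hQP).2.1⟩
  · intro P hP
    apply Set.Subset.antisymm
    · intro x hx
      have hPu := (h𝒬 P hP).2.2
      rw [hPu] at hx
      obtain ⟨Q, hQ, hxQ⟩ := hx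
      exact ⟨Q, ⟨Set.mem_biUnion hP hQ, ((h𝒬 P hP).2.1 Q hQ).2.1⟩, hxQ⟩
    · rintro x ⟨Q, ⟨-, hQP⟩, hxQ⟩
      exact hQP hxQ
  · intro Q hQ
    simp only [Set.mem_iUnion] at hQ
    obtain ⟨P, hP, hQP⟩ := hQ
    exact ((h𝒬 P hP).2.1 Q hQP).1
  · intro Q hQ
    simp only [Set.mem_iUnion] at hQ
    obtain ⟨P, hP, hQP⟩ := hQ
    exact ((h𝒬 P hP).2.1 Q hQP).2.2
end

section
/- Let V be a finite-dimensional real vector space, let P = ⋂_{i=1}^r {v ∈ V : ⟨u_i, v⟩ ≤ a_i} be a polyhedron, and for t ≥ 0 set P_t = ⋂_{i=1}^r {v ∈ V : ⟨u_i, v⟩ ≤ a_i + t}. If P' is a polyhedron in V with P ∩ P' = ∅, then there exists t > 0 such that P_t ∩ P' = ∅. -/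
open Module Finset

universe u

set_option maxHeartbeats 1000000 in
lemma farkas_aux : ∀ (d : ℕ) (V : Type u) [AddCommGroup V] [Module ℝ V]
    [FiniteDimensional ℝ V] (ι : Type) [Fintype ι] (f : ι → V →ₗ[ℝ] ℝ) (b : ι → ℝ),
    finrank ℝ V ≤ d → (∀ v : V, ∃ i, b i < f i v) →
    ∃ β : ℝ, β < 0 ∧ ((0 : V →ₗ[ℝ] ℝ), β) ∈
      Submodule.span {c : ℝ // 0 ≤ c} (Set.range fun i => (f i, b i)) := by
  intro d
  induction d with
  | zero =>
    intro V _ _ _ ι _ f b hrank h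
    have hsub : Subsingleton V := by
      rw [← Module.finrank_zero_iff (R := ℝ)]
      omega
    obtain ⟨i, hi⟩ := h 0
    rw [map_zero] at hi
    refine ⟨b i, hi, ?_⟩
    have hfi : f i = 0 := by
      ext v
      rw [Subsingleton.elim v 0, map_zero]; rfl
    have := Submodule.subset_span (R := {c : ℝ // 0 ≤ c}) (Set.mem_range_self (f := fun i => (f i, b i)) i)
    rwa [hfi] at this
  | succ d IH =>
    intro V _ _ _ ι _ f b hrank h
    classical
    by_cases hd : finrank ℝ V ≤ d
    · exact IH V ι f b hd h
    have hV : 0 < finrank ℝ V := by omega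
    have hnt : Nontrivial V := Module.nontrivial_of_finrank_pos hV
    obtain ⟨e, he⟩ := exists_ne (0 : V)
    obtain ⟨φ, hφc⟩ := LinearMap.exists_leftInverse_of_injective
      (LinearMap.toSpanSingleton ℝ V e) (LinearMap.ker_toSpanSingleton ℝ he)
    have hφe : φ e = 1 := by have := LinearMap.congr_fun hφc 1; simpa using this
    set W := LinearMap.ker φ with hWdef
    have hW : finrank ℝ W ≤ d := by
      have hr : LinearMap.range φ = ⊤ :=
        LinearMap.range_eq_top.mpr (fun c => ⟨c • e, by simp [hφe]⟩)
      have h2 := LinearMap.finrank_range_add_finrank_ker φ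
      rw [hr, finrank_top] at h2
      simp [Module.finrank_self] at h2
      rw [← hWdef] at h2
      omega
    set α : ι → ℝ := fun i => f i e with hα
    set G : ({i : ι // α i = 0} ⊕ ({i : ι // 0 < α i} × {j : ι // α j < 0})) →
        (V →ₗ[ℝ] ℝ) × ℝ := Sum.elim
      (fun i => (f i.1, b i.1))
      (fun p => (-(α p.2.1)) • (f p.1.1, b p.1.1) + (α p.1.1) • (f p.2.1, b p.2.1)) with hG
    set F : _ → W →ₗ[ℝ] ℝ := fun k => (G k).1.comp W.subtype with hF
    set B : _ → ℝ := fun k => (G k).2 with hB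
    have hfv : ∀ (i : ι) (x : ℝ) (w : W), f i ((w : V) + x • e) = f i (w : V) + x * α i := by
      intro i x w; rw [map_add, map_smul]; simp [hα]
    have h0 : ∀ (w : W), (∀ k, F k w ≤ B k) → ∀ i, (hi : α i = 0) → f i (w : V) ≤ b i := by
      intro w hcon i hi
      have := hcon (Sum.inl ⟨i, hi⟩)
      simpa [hF, hB, hG] using this
    have hpair : ∀ (w : W), (∀ k, F k w ≤ B k) → ∀ (p : {i : ι // 0 < α i}) (q : {j : ι // α j < 0}),
        (b q.1 - f q.1 (w : V)) / α q.1 ≤ (b p.1 - f p.1 (w : V)) / α p.1 := by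
      intro w hcon p q
      have hpq := hcon (Sum.inr (p, q))
      simp [hF, hB, hG] at hpq
      rw [le_div_iff₀ p.2, div_mul_eq_mul_div, div_le_iff_of_neg q.2]
      nlinarith [hpq]
    have hfeas : ∀ w : W, ∃ k, B k < F k w := by
      intro w
      by_contra hcon
      push_neg at hcon
      have main : ∃ x : ℝ, ∀ i, f i ((w : V) + x • e) ≤ b i := by
        by_cases hposne : Nonempty {i : ι // 0 < α i}
        · refine ⟨(univ : Finset {i : ι // 0 < α i}).inf' univ_nonempty
            (fun p => (b p.1 - f p.1 (w : V)) / α p.1), ?_⟩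
          intro i
          rcases lt_trichotomy (α i) 0 with hlt | heq | hgt
          · have hx : (b i - f i (w : V)) / α i ≤ _ :=
              Finset.le_inf' univ_nonempty _ (fun p _ => hpair w hcon p ⟨i, hlt⟩)
            rw [hfv]
            have := (div_le_iff_of_neg hlt).mp hx
            linarith
          · rw [hfv, heq]
            simpa using h0 w hcon i heq
          · have hx := Finset.inf'_le (b := ⟨i, hgt⟩)
              (fun p : {i : ι // 0 < α i} => (b p.1 - f p.1 (w : V)) / α p.1) (mem_univ _)
            rw [hfv]
            have := (le_div_iff₀ hgt).mp hx
            linarith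
        · by_cases hnegne : Nonempty {j : ι // α j < 0}
          · refine ⟨(univ : Finset {j : ι // α j < 0}).sup' univ_nonempty
              (fun q => (b q.1 - f q.1 (w : V)) / α q.1), ?_⟩
            intro i
            rcases lt_trichotomy (α i) 0 with hlt | heq | hgt
            · have hx := Finset.le_sup' (b := ⟨i, hlt⟩)
                (fun q : {j : ι // α j < 0} => (b q.1 - f q.1 (w : V)) / α q.1) (mem_univ _)
              rw [hfv]
              have := (div_le_iff_of_neg hlt).mp hx
              linarith
            · rw [hfv, heq]
              simpa using h0 w hcon i heq
            · exact absurd ⟨⟨i, hgt⟩⟩ hposne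
          · refine ⟨0, fun i => ?_⟩
            rcases lt_trichotomy (α i) 0 with hlt | heq | hgt
            · exact absurd ⟨⟨i, hlt⟩⟩ hnegne
            · rw [hfv, heq]
              simpa using h0 w hcon i heq
            · exact absurd ⟨⟨i, hgt⟩⟩ hposne
      obtain ⟨x, hx⟩ := main
      obtain ⟨i, hbi⟩ := h ((w : V) + x • e)
      exact absurd (hx i) (not_le.mpr hbi)
    obtain ⟨β, hβ, hmem⟩ := IH W _ F B hW hfeas
    -- the restriction map, as a `{c : ℝ // 0 ≤ c}`-linear map
    set res : (V →ₗ[ℝ] ℝ) →ₗ[ℝ] (W →ₗ[ℝ] ℝ) :=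
      { toFun := fun g => g.comp W.subtype
        map_add' := fun _ _ => rfl
        map_smul' := fun _ _ => rfl } with hres
    set ρ : ((V →ₗ[ℝ] ℝ) × ℝ) →ₗ[ℝ] ((W →ₗ[ℝ] ℝ) × ℝ) := res.prodMap LinearMap.id with hρ
    set ρ' : ((V →ₗ[ℝ] ℝ) × ℝ) →ₗ[{c : ℝ // 0 ≤ c}] ((W →ₗ[ℝ] ℝ) × ℝ) :=
      { toFun := ρ
        map_add' := ρ.map_add
        map_smul' := fun c z => by
          refine Prod.ext ?_ rfl
          ext w
          rfl } with hρ'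
    have hrange : (Set.range fun k => (F k, B k)) = ρ' '' Set.range G := by
      rw [← Set.range_comp]
      rfl
    rw [hrange, ← Submodule.map_span] at hmem
    obtain ⟨z, hz, hzeq⟩ := hmem
    have hz1 : z.1.comp W.subtype = 0 := congrArg Prod.fst hzeq
    have hz2 : z.2 = β := congrArg Prod.snd hzeq
    -- z.1 vanishes at e
    have hzke : z.1 e = 0 := by
      set ev : ((V →ₗ[ℝ] ℝ) × ℝ) →ₗ[{c : ℝ // 0 ≤ c}] ℝ :=
        { toFun := fun p => p.1 e
          map_add' := fun _ _ => rfl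
          map_smul' := fun _ _ => rfl } with hev
      have hker : Submodule.span {c : ℝ // 0 ≤ c} (Set.range G) ≤ LinearMap.ker ev := by
        rw [Submodule.span_le]
        rintro _ ⟨k, rfl⟩
        rcases k with i | p
        · simpa [hev, hG] using i.2
        · simp [hev, hG]
          ring
      exact hker hz
    -- hence z.1 = 0
    have hzk : z.1 = 0 := by
      ext v
      have hvW : v - φ v • e ∈ W := by
        rw [hWdef, LinearMap.mem_ker, map_sub, map_smul, hφe]
        simp
      have h1 : z.1 (v - φ v • e) = 0 := LinearMap.congr_fun hz1 ⟨v - φ v • e, hvW⟩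
      have : z.1 v = z.1 (v - φ v • e) + φ v * z.1 e := by
        rw [map_sub, map_smul]
        simp
      rw [this, h1, hzke]
      simp
    -- z lies in the span of the original pairs
    have hGmem : ∀ k, G k ∈
        Submodule.span {c : ℝ // 0 ≤ c} (Set.range fun i => (f i, b i)) := by
      intro k
      rcases k with i | p
      · exact Submodule.subset_span ⟨i.1, rfl⟩
      · have h1 : (f p.1.1, b p.1.1) ∈
            Submodule.span {c : ℝ // 0 ≤ c} (Set.range fun i => (f i, b i)) :=
          Submodule.subset_span ⟨p.1.1, rfl⟩
        have h2 : (f p.2.1, b p.2.1) ∈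
            Submodule.span {c : ℝ // 0 ≤ c} (Set.range fun i => (f i, b i)) :=
          Submodule.subset_span ⟨p.2.1, rfl⟩
        have := Submodule.add_mem _
          (Submodule.smul_mem _ (⟨-(α p.2.1), by linarith [p.2.2]⟩ : {c : ℝ // 0 ≤ c}) h1)
          (Submodule.smul_mem _ (⟨α p.1.1, le_of_lt p.1.2⟩ : {c : ℝ // 0 ≤ c}) h2)
        simpa [hG, Nonneg.mk_smul] using this
    have hzmem : z ∈ Submodule.span {c : ℝ // 0 ≤ c} (Set.range fun i => (f i, b i)) := by
      refine Submodule.span_le.mpr ?_ hz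
      rintro _ ⟨k, rfl⟩
      exact hGmem k
    refine ⟨β, hβ, ?_⟩
    have : ((0 : V →ₗ[ℝ] ℝ), β) = z := by
      rw [Prod.ext_iff]
      exact ⟨hzk.symm, hz2.symm⟩
    rwa [this]

/-- If `P = ⋂ᵢ {v : ⟨uᵢ, v⟩ ≤ aᵢ}` is a polyhedron disjoint from a polyhedron `P'`, then
some thickening `P_t = ⋂ᵢ {v : ⟨uᵢ, v⟩ ≤ aᵢ + t}`, `t > 0`, is still disjoint from `P'`. -/
theorem exists_thickening_disjoint {V : Type*} [AddCommGroup V] [Module ℝ V]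
    [FiniteDimensional ℝ V] {r : ℕ} (u : Fin r → (V →ₗ[ℝ] ℝ)) (a : Fin r → ℝ)
    (P' : Set V) (hP' : IsPolyhedron P')
    (hdisj : (⋂ i, {v : V | u i v ≤ a i}) ∩ P' = ∅) :
    ∃ t > (0 : ℝ), (⋂ i, {v : V | u i v ≤ a i + t}) ∩ P' = ∅ := by
  obtain ⟨m, w, c, rfl⟩ := hP'
  set f : (Fin r ⊕ Fin m) → V →ₗ[ℝ] ℝ := Sum.elim u w with hf
  set b : (Fin r ⊕ Fin m) → ℝ := Sum.elim a c with hb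
  have h : ∀ v : V, ∃ k, b k < f k v := by
    intro v
    by_contra hcon
    push_neg at hcon
    have hv : v ∈ (⋂ i, {v : V | u i v ≤ a i}) ∩ ⋂ j, {v : V | w j v ≤ c j} := by
      refine ⟨Set.mem_iInter.mpr fun i => hcon (Sum.inl i),
        Set.mem_iInter.mpr fun j => hcon (Sum.inr j)⟩
    rw [hdisj] at hv
    exact hv
  obtain ⟨β, hβ, hmem⟩ := farkas_aux (Module.finrank ℝ V) V _ f b le_rfl h
  rw [Submodule.mem_span_range_iff_exists_fun {c : ℝ // 0 ≤ c}] at hmem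
  obtain ⟨lam, hlam⟩ := hmem
  have h1 : (∑ k, lam k • f k) = (0 : V →ₗ[ℝ] ℝ) := by
    have := congrArg Prod.fst hlam
    simpa only [Prod.fst_sum, Prod.smul_fst] using this
  have h2' : (∑ k, lam k • b k) = β := by
    have := congrArg Prod.snd hlam
    simpa only [Prod.snd_sum, Prod.smul_snd] using this
  have h2 : (∑ k, (lam k : ℝ) * b k) = β := h2'
  set A : ℝ := ∑ i : Fin r, (lam (Sum.inl i) : ℝ) with hA
  have hA0 : 0 ≤ A := Finset.sum_nonneg fun i _ => (lam (Sum.inl i)).2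
  set t : ℝ := -β / (2 * (A + 1)) with ht
  have htpos : 0 < t := div_pos (by linarith) (by linarith)
  refine ⟨t, htpos, ?_⟩
  rw [Set.eq_empty_iff_forall_notMem]
  rintro v ⟨hv1, hv2⟩
  rw [Set.mem_iInter] at hv1 hv2
  have hzero : (∑ k, (lam k : ℝ) * f k v) = 0 := by
    have := LinearMap.congr_fun h1 v
    simpa [LinearMap.sum_apply, LinearMap.smul_apply, ← Nonneg.coe_smul, smul_eq_mul] using this
  have hle : (∑ k, (lam k : ℝ) * f k v) ≤
      ∑ k, (lam k : ℝ) * Sum.elim (fun i => a i + t) c k := by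
    refine Finset.sum_le_sum fun k _ => mul_le_mul_of_nonneg_left ?_ (lam k).2
    rcases k with i | j
    · exact hv1 i
    · exact hv2 j
  have hsplit : (∑ k, (lam k : ℝ) * Sum.elim (fun i => a i + t) c k) =
      (∑ k, (lam k : ℝ) * b k) + t * A := by
    rw [Fintype.sum_sum_type, Fintype.sum_sum_type, hA, Finset.mul_sum]
    simp only [Sum.elim_inl, Sum.elim_inr, hb]
    have e1 : ∑ x : Fin r, ((lam (Sum.inl x) : ℝ)) * (a x + t)
        = ∑ x : Fin r, (((lam (Sum.inl x) : ℝ)) * a x + t * ((lam (Sum.inl x) : ℝ))) :=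
      Finset.sum_congr rfl fun x _ => by ring
    rw [e1, Finset.sum_add_distrib]
    ring
  have hcontr : (0 : ℝ) ≤ β + t * A := by
    rw [← hzero]
    calc (∑ k, (lam k : ℝ) * f k v) ≤ _ := hle
    _ = β + t * A := by rw [hsplit, h2]
  have htA : t * A + β < 0 := by
    have h3 : t * (A + 1) = -β / 2 := by
      rw [ht]
      field_simp
    nlinarith
  linarith
end

section
/- Let G ⊆ ℝ be a divisible additive subgroup, let 𝒫 be a nonempty finite collection of nonempty integral G-affine polyhedra in ℝ^n, and let Δ be an integral pointed fan that is a compactifying fan for 𝒫. Then there exists an integral G-affine pointed polyhedron P with ⋃_{P'∈𝒫} P' ⊆ P and ρ(P) ∈ Δ if and only if there exists a cone σ ∈ Δ such that for every P' ∈ 𝒫, the recession cone ρ(P') is a face of σ. -/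
open Set

/-! ### Auxiliary lemmas -/

/-- Farkas' lemma (Bartl's version), by induction on the number of constraints. -/
theorem farkas_aux_s16 {F : Type*} [Field F] [LinearOrder F] [IsStrictOrderedRing F] {V : Type*} [AddCommGroup V]
    [Module F V] :
    ∀ (m : ℕ) (g : Fin m → V →ₗ[F] F) (f : V →ₗ[F] F),
      (∀ x, (∀ i, g i x ≤ 0) → f x ≤ 0) →
      ∃ lam : Fin m → F, (∀ i, 0 ≤ lam i) ∧ ∀ x, f x = ∑ i, lam i * g i x := by
  intro m
  induction m with
  | zero =>
    intro g f h
    refine ⟨fun i => 0, fun i => le_refl _, fun x => ?_⟩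
    have h1 := h x (fun i => i.elim0)
    have h2 := h (-x) (fun i => i.elim0)
    rw [map_neg] at h2
    simp only [Finset.univ_eq_empty, Finset.sum_empty]
    linarith
  | succ m ih =>
    intro g f h
    by_cases hc : ∀ x, (∀ i : Fin m, g i.castSucc x ≤ 0) → f x ≤ 0
    · obtain ⟨lam, hlam, hf⟩ := ih (fun i => g i.castSucc) f hc
      refine ⟨Fin.snoc lam 0, ?_, fun x => ?_⟩
      · intro i
        induction i using Fin.lastCases with
        | last => simp
        | cast i => simpa using hlam i
      · rw [Fin.sum_univ_castSucc]
        simp only [Fin.snoc_castSucc, Fin.snoc_last, zero_mul, add_zero]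
        exact hf x
    · push_neg at hc
      obtain ⟨x₀, hx₀g, hx₀f⟩ := hc
      have hα : 0 < g (Fin.last m) x₀ := by
        by_contra hle
        push_neg at hle
        refine absurd (h x₀ ?_) (not_le.2 hx₀f)
        intro i
        induction i using Fin.lastCases with
        | last => exact hle
        | cast i => exact hx₀g i
      set α := g (Fin.last m) x₀ with hαdef
      set g' : Fin m → V →ₗ[F] F :=
        fun i => α • g i.castSucc - g i.castSucc x₀ • g (Fin.last m) with hg'def
      set f' : V →ₗ[F] F := α • f - f x₀ • g (Fin.last m) with hf'def
      have hyp' : ∀ x, (∀ i, g' i x ≤ 0) → f' x ≤ 0 := by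
        intro x hx
        set y := α • x - g (Fin.last m) x • x₀ with hydef
        have hgy : ∀ i : Fin (m+1), g i y ≤ 0 := by
          intro i
          induction i using Fin.lastCases with
          | last =>
            simp only [hydef, map_sub, map_smul, smul_eq_mul]
            ring_nf
            simp [mul_comm, hαdef]
          | cast i =>
            have := hx i
            simp only [hg'def, LinearMap.sub_apply, LinearMap.smul_apply, smul_eq_mul] at this
            simp only [hydef, map_sub, map_smul, smul_eq_mul]
            nlinarith [this]
        have := h y hgy
        simp only [hydef, map_sub, map_smul, smul_eq_mul] at this
        simp only [hf'def, LinearMap.sub_apply, LinearMap.smul_apply, smul_eq_mul]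
        nlinarith [this]
      obtain ⟨μ, hμ, hfμ⟩ := ih g' f' hyp'
      set s0 := ∑ i, μ i * g i.castSucc x₀ with hs0
      have hs0le : s0 ≤ 0 :=
        Finset.sum_nonpos fun i _ => mul_nonpos_of_nonneg_of_nonpos (hμ i) (hx₀g i)
      refine ⟨Fin.snoc μ ((f x₀ - s0) / α), ?_, fun x => ?_⟩
      · intro i
        induction i using Fin.lastCases with
        | last =>
          simp only [Fin.snoc_last]
          apply div_nonneg _ (le_of_lt hα)
          linarith
        | cast i => simpa using hμ i
      · have key := hfμ x
        simp only [hf'def, hg'def, LinearMap.sub_apply, LinearMap.smul_apply,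
          smul_eq_mul] at key
        have hexp : ∑ i, μ i * (α * g i.castSucc x - g i.castSucc x₀ * g (Fin.last m) x)
            = α * (∑ i, μ i * g i.castSucc x) - s0 * g (Fin.last m) x := by
          rw [Finset.mul_sum, hs0, Finset.sum_mul, ← Finset.sum_sub_distrib]
          exact Finset.sum_congr rfl fun i _ => by ring
        rw [hexp] at key
        rw [Fin.sum_univ_castSucc]
        simp only [Fin.snoc_castSucc, Fin.snoc_last]
        have hαne : α ≠ 0 := ne_of_gt hα
        field_simp
        linear_combination key

/-- Dot product with a fixed coefficient vector, as a linear map. -/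
def dotL {R : Type*} [CommSemiring R] {n : ℕ} (c : Fin n → R) : (Fin n → R) →ₗ[R] R where
  toFun v := ∑ j, c j * v j
  map_add' x y := by simp [mul_add, Finset.sum_add_distrib]
  map_smul' r x := by simp [Finset.mul_sum, mul_left_comm]

@[simp] lemma dotL_apply {R : Type*} [CommSemiring R] {n : ℕ} (c v : Fin n → R) :
    dotL c v = ∑ j, c j * v j := rfl

lemma add_nsmul_mem_of_recCone {V : Type*} [AddCommGroup V] [Module ℝ V] {P : Set V}
    {w : V} (hw : w ∈ recCone P) {v : V} (hv : v ∈ P) (k : ℕ) : v + k • w ∈ P := by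
  induction k with
  | zero => simpa using hv
  | succ k ih => rw [succ_nsmul, ← add_assoc]; exact hw _ ih

lemma linear_nonpos_of_bounded {V : Type*} [AddCommGroup V] [Module ℝ V]
    (f : V →ₗ[ℝ] ℝ) (c : ℝ) (v w : V) (h : ∀ k : ℕ, f (v + k • w) ≤ c) : f w ≤ 0 := by
  by_contra hpos
  push_neg at hpos
  obtain ⟨k, hk⟩ := exists_nat_gt ((c - f v) / f w)
  have h2 := h k
  have hsm : (k : ℕ) • w = (k : ℝ) • w := (Nat.cast_smul_eq_nsmul ℝ k w).symm
  rw [hsm, map_add, map_smul, smul_eq_mul] at h2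
  have := (div_lt_iff₀ hpos).mp hk
  linarith

/-- If a nonempty set `P'` with recession cone containing `w` lies inside an intersection
of halfspaces, each defining functional is nonpositive on `w`. -/
lemma recCone_subset_halfspaces {V : Type*} [AddCommGroup V] [Module ℝ V]
    {m : ℕ} (f : Fin m → V →ₗ[ℝ] ℝ) (c : Fin m → ℝ) {P' : Set V}
    (hsub : P' ⊆ ⋂ i, {v : V | f i v ≤ c i}) (hne : P'.Nonempty) :
    recCone P' ⊆ ⋂ i, {v : V | f i v ≤ 0} := by
  intro w hw
  obtain ⟨v₀, hv₀⟩ := hne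
  simp only [mem_iInter, mem_setOf_eq]
  intro i
  refine linear_nonpos_of_bounded (f i) (c i) v₀ w (fun k => ?_)
  have := hsub (add_nsmul_mem_of_recCone hw hv₀ k)
  simp only [mem_iInter, mem_setOf_eq] at this
  exact this i

/-- Recession cone of a nonempty intersection of halfspaces. -/
lemma recCone_halfspaces {V : Type*} [AddCommGroup V] [Module ℝ V]
    {m : ℕ} (f : Fin m → V →ₗ[ℝ] ℝ) (c : Fin m → ℝ)
    (hne : (⋂ i, {v : V | f i v ≤ c i}).Nonempty) :
    recCone (⋂ i, {v : V | f i v ≤ c i}) = ⋂ i, {v : V | f i v ≤ 0} := by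
  apply Subset.antisymm
  · exact recCone_subset_halfspaces f c Subset.rfl hne
  · intro w hw v hv
    simp only [mem_iInter, mem_setOf_eq] at *
    intro i
    rw [map_add]
    linarith [hv i, hw i]

lemma rat_mul_mem (G : AddSubgroup ℝ)
    (hGdiv : ∀ g ∈ G, ∀ k : ℕ, 0 < k → ∃ g' ∈ G, (k : ℝ) * g' = g)
    {q : ℚ} (hq : 0 ≤ q) {g : ℝ} (hg : g ∈ G) : (q : ℝ) * g ∈ G := by
  obtain ⟨g', hg', hgg⟩ := hGdiv g hg q.den q.pos
  have hd : (q.den : ℝ) ≠ 0 := Nat.cast_ne_zero.2 q.den_nz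
  have hnum : ((q.num.toNat : ℤ) : ℝ) = (q.num : ℝ) := by
    rw [Int.toNat_of_nonneg (Rat.num_nonneg.2 hq)]
  have hqg : (q : ℝ) * g = (q.num.toNat : ℝ) * g' := by
    rw [← hgg, Rat.cast_def]
    field_simp
    rw [← hnum]
    push_cast
    ring
  rw [hqg]
  have := AddSubgroup.nsmul_mem G hg' q.num.toNat
  rwa [nsmul_eq_mul] at this

/-- A convex-cone-like union of cones of a fan inside a cone `σ` of the fan is a face
of `σ`. -/
lemma isFace_of_sUnion {V : Type*} [AddCommGroup V] [Module ℝ V] {Δ : Set (Set V)}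
    (hΔ : IsFan Δ) {σ : Set V} (hσ : σ ∈ Δ) {S : Set (Set V)} (hS : S ⊆ Δ)
    (C : Set V) (hCS : C = ⋃₀ S) (hsub : C ⊆ σ) (h0 : (0 : V) ∈ C)
    (hadd : ∀ x ∈ C, ∀ y ∈ C, x + y ∈ C) :
    IsFaceOfCone σ C := by
  classical
  have hτσ : ∀ τ ∈ S, τ ⊆ σ := fun τ hτ x hx => hsub (by rw [hCS]; exact ⟨τ, hτ, hx⟩)
  have hface : ∀ τ ∈ S, ∃ u : V →ₗ[ℝ] ℝ, (∀ x ∈ σ, u x ≤ 0) ∧ τ = {x ∈ σ | u x = 0} := by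
    intro τ hτ
    have h2 := (hΔ.2.2.2 σ hσ τ (hS hτ)).1
    rwa [inter_eq_self_of_subset_right (hτσ τ hτ)] at h2
  choose! u hu1 hu2 using hface
  have hτ0 : ∀ τ ∈ S, (0 : V) ∈ τ ∧ ∀ x ∈ τ, ∀ y ∈ τ, x + y ∈ τ := by
    intro τ hτ
    obtain ⟨mτ, gτ, hgτ⟩ := hΔ.2.1 τ (hS hτ)
    subst hgτ
    constructor
    · simp only [mem_iInter, mem_setOf_eq]
      intro i; simp
    · intro x hx y hy
      simp only [mem_iInter, mem_setOf_eq] at *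
      intro i
      rw [map_add]
      linarith [hx i, hy i]
  have hSfin : S.Finite := hΔ.1.subset hS
  set T := hSfin.toFinset with hT
  have hy : ∀ τ ∈ S, ∀ s : Set V, ∃ y ∈ τ, ((∃ z ∈ τ, u s z ≠ 0) → u s y ≠ 0) := by
    intro τ hτ s
    by_cases h : ∃ z ∈ τ, u s z ≠ 0
    · obtain ⟨z, hz, hz'⟩ := h
      exact ⟨z, hz, fun _ => hz'⟩
    · exact ⟨0, (hτ0 τ hτ).1, fun h' => absurd h' h⟩
  choose! y hy1 hy2 using hy
  set x : Set V → V := fun τ => ∑ s ∈ T, y τ s with hx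
  have hxτ : ∀ τ ∈ S, x τ ∈ τ := by
    intro τ hτ
    refine Finset.sum_induction _ (· ∈ τ) ?_ (hτ0 τ hτ).1 ?_
    · intro a b ha hb; exact (hτ0 τ hτ).2 a ha b hb
    · intro s _; exact hy1 τ hτ s
  have hxC : (∑ τ ∈ T, x τ) ∈ C := by
    refine Finset.sum_induction _ (· ∈ C) ?_ h0 ?_
    · intro a b ha hb; exact hadd a ha b hb
    · intro τ hτ
      rw [hCS]
      have hτS : τ ∈ S := hSfin.mem_toFinset.1 hτ
      exact ⟨τ, hτS, hxτ τ hτS⟩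
  obtain ⟨τ₀, hτ₀S, hxτ₀⟩ : ∃ τ₀ ∈ S, (∑ τ ∈ T, x τ) ∈ τ₀ := by
    rw [hCS] at hxC; exact hxC
  refine ⟨u τ₀, hu1 τ₀ hτ₀S, ?_⟩
  have hzero : ∀ τ ∈ S, ∀ z ∈ τ, u τ₀ z = 0 := by
    have hx0 : u τ₀ (∑ τ ∈ T, x τ) = 0 := by
      have := hu2 τ₀ hτ₀S
      rw [this] at hxτ₀
      exact hxτ₀.2
    rw [map_sum] at hx0
    have hterm : ∀ τ ∈ T, u τ₀ (x τ) = 0 := by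
      refine (Finset.sum_eq_zero_iff_of_nonpos ?_).1 hx0
      intro τ hτ
      exact hu1 τ₀ hτ₀S _ (hτσ τ (hSfin.mem_toFinset.1 hτ) (hxτ τ (hSfin.mem_toFinset.1 hτ)))
    intro τ hτ z hz
    by_contra hne
    have hex : ∃ z ∈ τ, u τ₀ z ≠ 0 := ⟨z, hz, hne⟩
    have h5 := hy2 τ hτ τ₀ hex
    have hterm2 := hterm τ (hSfin.mem_toFinset.2 hτ)
    rw [hx, map_sum] at hterm2
    have : ∀ s ∈ T, u τ₀ (y τ s) = 0 := by
      refine (Finset.sum_eq_zero_iff_of_nonpos ?_).1 hterm2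
      intro s hs
      exact hu1 τ₀ hτ₀S _ (hτσ τ hτ (hy1 τ hτ s))
    exact h5 (this τ₀ (hSfin.mem_toFinset.2 hτ₀S))
  apply Subset.antisymm
  · intro w hw
    rw [hCS] at hw
    obtain ⟨τ, hτ, hwτ⟩ := hw
    exact ⟨hτσ τ hτ hwτ, hzero τ hτ w hwτ⟩
  · rw [← hu2 τ₀ hτ₀S, hCS]
    exact fun w hw => ⟨τ₀, hτ₀S, hw⟩

/-- Let `G ⊆ ℝ` be a divisible subgroup, `𝒞` a nonempty finite collection of nonempty
integral `G`-affine polyhedra in `ℝⁿ`, and `Δ` an integral pointed compactifying fan for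
`𝒞`.  Then there exists an integral `G`-affine pointed polyhedron `P` with `|𝒞| ⊆ P` and
`ρ(P) ∈ Δ` if and only if there is a cone `σ ∈ Δ` such that `ρ(P')` is a face of `σ` for
every `P' ∈ 𝒞`. -/
theorem exists_enclosing_polyhedron_iff {n : ℕ} (G : AddSubgroup ℝ)
    (hGdiv : ∀ g ∈ G, ∀ k : ℕ, 0 < k → ∃ g' ∈ G, (k : ℝ) * g' = g)
    (𝒞 : Set (Set (Fin n → ℝ))) (h𝒞fin : 𝒞.Finite) (h𝒞ne : 𝒞.Nonempty)
    (h𝒞 : ∀ P ∈ 𝒞, IsIntegralGPolyhedron G P ∧ P.Nonempty)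
    (Δ : Set (Set (Fin n → ℝ))) (hΔ : IsPointedFan Δ)
    (hΔint : ∀ σ ∈ Δ, IsIntegralCone σ) (hcpt : IsCompactifyingFan Δ 𝒞) :
    (∃ P : Set (Fin n → ℝ), IsIntegralGPolyhedron G P ∧ IsPointedSet (recCone P) ∧
        ⋃₀ 𝒞 ⊆ P ∧ recCone P ∈ Δ) ↔
      ∃ σ ∈ Δ, ∀ P' ∈ 𝒞, IsFaceOfCone σ (recCone P') := by
  classical
  constructor
  · -- forward direction
    rintro ⟨P, hPint, _, hPsub, hPΔ⟩
    refine ⟨recCone P, hPΔ, fun P' hP' => ?_⟩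
    obtain ⟨mP', w, b, _, hP'eq⟩ := (h𝒞 P' hP').1
    have hP'ne := (h𝒞 P' hP').2
    obtain ⟨m, uP, a, _, hPeq⟩ := hPint
    set f : Fin m → (Fin n → ℝ) →ₗ[ℝ] ℝ := fun i => dotL (fun j => ((uP i j : ℤ) : ℝ))
      with hf
    have hPeq' : P = ⋂ i, {v : Fin n → ℝ | f i v ≤ a i} := hPeq
    have hP'subP : P' ⊆ P := fun v hv => hPsub ⟨P', hP', hv⟩
    have hρ'sub : recCone P' ⊆ recCone P := by
      have h1 : recCone P' ⊆ ⋂ i, {v : Fin n → ℝ | f i v ≤ 0} :=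
        recCone_subset_halfspaces f a (hPeq' ▸ hP'subP) hP'ne
      have h2 : recCone P = ⋂ i, {v : Fin n → ℝ | f i v ≤ 0} := by
        rw [hPeq']
        exact recCone_halfspaces f a (hPeq' ▸ (hP'ne.mono hP'subP))
      rw [h2]; exact h1
    obtain ⟨S, hS, hCS⟩ := hcpt P' hP'
    set g : Fin mP' → (Fin n → ℝ) →ₗ[ℝ] ℝ := fun j' => dotL (fun j => ((w j' j : ℤ) : ℝ))
      with hg
    have hP'eq' : P' = ⋂ j', {v : Fin n → ℝ | g j' v ≤ b j'} := hP'eq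
    have hρ' : recCone P' = ⋂ j', {v : Fin n → ℝ | g j' v ≤ 0} := by
      rw [hP'eq']
      exact recCone_halfspaces g b (hP'eq' ▸ hP'ne)
    refine isFace_of_sUnion hΔ.1 hPΔ hS (recCone P') hCS hρ'sub ?_ ?_
    · rw [hρ']
      simp only [mem_iInter, mem_setOf_eq]
      intro j'; simp
    · intro x hx z hz
      rw [hρ'] at *
      simp only [mem_iInter, mem_setOf_eq] at *
      intro j'
      rw [map_add]
      linarith [hx j', hz j']
  · -- reverse direction
    rintro ⟨σ, hσ, hface⟩
    obtain ⟨m, u, hσeq⟩ := hΔint σ hσ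
    have hbound : ∀ P' ∈ 𝒞, ∃ a : Fin m → ℝ, (∀ i, a i ∈ G) ∧
        ∀ i, ∀ v ∈ P', ∑ j, (u i j : ℝ) * v j ≤ a i := by
      intro P' hP'
      obtain ⟨m', w, b, hbG, hP'eq⟩ := (h𝒞 P' hP').1
      have hP'ne := (h𝒞 P' hP').2
      obtain ⟨gf, _, hfaceEq⟩ := hface P' hP'
      have hρσ : recCone P' ⊆ σ := by rw [hfaceEq]; exact fun x hx => hx.1
      set g : Fin m' → (Fin n → ℝ) →ₗ[ℝ] ℝ := fun j' => dotL (fun j => ((w j' j : ℤ) : ℝ))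
        with hg
      have hP'eq' : P' = ⋂ j', {v : Fin n → ℝ | g j' v ≤ b j'} := hP'eq
      have hρ : recCone P' = ⋂ j', {v : Fin n → ℝ | g j' v ≤ 0} := by
        rw [hP'eq']
        exact recCone_halfspaces g b (hP'eq' ▸ hP'ne)
      have hai : ∀ i : Fin m, ∃ a ∈ G, ∀ v ∈ P', ∑ j, (u i j : ℝ) * v j ≤ a := by
        intro i
        have hhyp : ∀ x : Fin n → ℚ,
            (∀ j', dotL (fun j => ((w j' j : ℤ) : ℚ)) x ≤ 0) →
            dotL (fun j => ((u i j : ℤ) : ℚ)) x ≤ 0 := by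
          intro x hx
          have hxr : (fun j => ((x j : ℚ) : ℝ)) ∈ recCone P' := by
            rw [hρ]
            simp only [mem_iInter, mem_setOf_eq, hg, dotL_apply]
            intro j'
            have h1 := hx j'
            simp only [dotL_apply] at h1
            have h2 : ((∑ j, ((w j' j : ℤ) : ℚ) * x j : ℚ) : ℝ) ≤ 0 := by
              exact_mod_cast h1
            push_cast at h2
            exact h2
          have hσx := hρσ hxr
          rw [hσeq] at hσx
          simp only [mem_iInter, mem_setOf_eq] at hσx
          have h3 := hσx i
          simp only [dotL_apply]
          have h4 : ((∑ j, ((u i j : ℤ) : ℚ) * x j : ℚ) : ℝ) ≤ 0 := by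
            push_cast
            exact h3
          exact_mod_cast h4
        obtain ⟨lam, hlam, hfeq⟩ := farkas_aux_s16 m' _ _ hhyp
        have hcoord : ∀ k, ((u i k : ℤ) : ℚ) = ∑ j', lam j' * ((w j' k : ℤ) : ℚ) := by
          intro k
          have h5 := hfeq (Pi.single k 1)
          simp only [dotL_apply, Pi.single_apply, mul_ite, mul_one, mul_zero,
            Finset.sum_ite_eq', Finset.mem_univ, if_true] at h5
          exact h5
        refine ⟨∑ j', (lam j' : ℝ) * b j',
          AddSubgroup.sum_mem G (fun j' _ => rat_mul_mem G hGdiv (hlam j') (hbG j')), ?_⟩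
        intro v hv
        have hukr : ∀ k, ((u i k : ℤ) : ℝ) = ∑ j', (lam j' : ℝ) * ((w j' k : ℤ) : ℝ) := by
          intro k
          have := hcoord k
          have h6 : (((u i k : ℤ) : ℚ) : ℝ) = ((∑ j', lam j' * ((w j' k : ℤ) : ℚ) : ℚ) : ℝ) := by
            exact_mod_cast congrArg (fun q : ℚ => (q : ℝ)) this
          push_cast at h6
          exact_mod_cast h6
        have hvb : ∀ j', ∑ k, ((w j' k : ℤ) : ℝ) * v k ≤ b j' := by
          intro j'
          have := hP'eq ▸ hv
          simp only [mem_iInter, mem_setOf_eq] at this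
          exact this j'
        calc ∑ k, ((u i k : ℤ) : ℝ) * v k
            = ∑ k, (∑ j', (lam j' : ℝ) * ((w j' k : ℤ) : ℝ)) * v k := by
              exact Finset.sum_congr rfl fun k _ => by rw [hukr k]
          _ = ∑ j', (lam j' : ℝ) * ∑ k, ((w j' k : ℤ) : ℝ) * v k := by
              simp only [Finset.sum_mul, Finset.mul_sum]
              rw [Finset.sum_comm]
              exact Finset.sum_congr rfl fun j' _ =>
                Finset.sum_congr rfl fun k _ => by ring
          _ ≤ ∑ j', (lam j' : ℝ) * b j' := by
              refine Finset.sum_le_sum fun j' _ => ?_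
              exact mul_le_mul_of_nonneg_left (hvb j') (by exact_mod_cast hlam j')
      choose a haG hab using hai
      exact ⟨a, haG, hab⟩
    choose! A hAG hAb using hbound
    have hTne : h𝒞fin.toFinset.Nonempty := by
      rwa [Set.Finite.toFinset_nonempty]
    have key : ∀ i : Fin m, ∃ aG ∈ G, ∀ P' ∈ 𝒞, ∀ v ∈ P',
        ∑ j, (u i j : ℝ) * v j ≤ aG := by
      intro i
      obtain ⟨P₁, hP₁, hPa⟩ := Finset.mem_image.1
        (Finset.max'_mem (h𝒞fin.toFinset.image (fun P' => A P' i))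
          (hTne.image (fun P' => A P' i)))
      refine ⟨(h𝒞fin.toFinset.image (fun P' => A P' i)).max'
        (hTne.image (fun P' => A P' i)), ?_, ?_⟩
      · rw [← hPa]
        exact hAG P₁ (h𝒞fin.mem_toFinset.1 hP₁) i
      · intro P' hP' v hv
        refine le_trans (hAb P' hP' i v hv) ?_
        exact Finset.le_max' (h𝒞fin.toFinset.image (fun P'' => A P'' i)) (A P' i)
          (Finset.mem_image_of_mem (fun P'' => A P'' i) (h𝒞fin.mem_toFinset.2 hP'))
    choose aa haaG hbnd' using key
    have hbnd : ∀ P' ∈ 𝒞, ∀ v ∈ P', ∀ i, ∑ j, (u i j : ℝ) * v j ≤ aa i :=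
      fun P' hP' v hv i => hbnd' i P' hP' v hv
    have hPne : (⋂ i, {v : Fin n → ℝ | ∑ j, (u i j : ℝ) * v j ≤ aa i}).Nonempty := by
      obtain ⟨P₀, hP₀⟩ := h𝒞ne
      obtain ⟨v₀, hv₀⟩ := (h𝒞 P₀ hP₀).2
      refine ⟨v₀, ?_⟩
      simp only [mem_iInter, mem_setOf_eq]
      exact fun i => hbnd P₀ hP₀ v₀ hv₀ i
    have hρP : recCone (⋂ i, {v : Fin n → ℝ | ∑ j, (u i j : ℝ) * v j ≤ aa i}) = σ := by
      have h8 := recCone_halfspaces (fun i => dotL (fun j => ((u i j : ℤ) : ℝ))) aa hPne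
      rw [hσeq]
      exact h8
    refine ⟨⋂ i, {v : Fin n → ℝ | ∑ j, (u i j : ℝ) * v j ≤ aa i},
      ⟨m, u, aa, haaG, rfl⟩, ?_, ?_, ?_⟩
    · rw [hρP]; exact hΔ.2 σ hσ
    · intro v hv
      obtain ⟨P', hP', hvP'⟩ := hv
      simp only [mem_iInter, mem_setOf_eq]
      exact fun i => hbnd P' hP' v hvP' i
    · rw [hρP]; exact hσ
end
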